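/- For ν > 0 with |z| < 1, Euler's integral representation holds: ₂F₁(a, b, c; z) = Γ(c)/(Γ(b)Γ(c−b)) ∫₀¹ t^(b−1) (1−t)^(c−b−1) (1−zt)^(−a) dt, whenever Re(c) > Re(b) > 0. -/

import Mathlib

open Complex MeasureTheory intervalIntegral

/-- Pochhammer symbol `(s)_k` for complex `s`. -/
noncomputable def cpoch (s : ℂ) (k : ℕ) : ℂ := ∏ i ∈ Finset.range k, (s + i)

/-- Gauss hypergeometric function `₂F₁` (complex), defined by its power series. -/
noncomputable def hyp2F1 (a b c z : ℂ) : ℂ :=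
  ∑' n : ℕ, cpoch a n * cpoch b n / (cpoch c n * (n.factorial : ℂ)) * z ^ n

open Filter
open scoped ENNReal NNReal

noncomputable def ecoef (a : ℂ) (n : ℕ) : ℂ := cpoch a n / n.factorial

lemma cpoch_zero (s : ℂ) : cpoch s 0 = 1 := by simp [cpoch]

lemma cpoch_succ (s : ℂ) (n : ℕ) : cpoch s (n + 1) = cpoch s n * (s + n) :=
  Finset.prod_range_succ _ _

lemma ecoef_zero (a : ℂ) : ecoef a 0 = 1 := by simp [ecoef, cpoch_zero]

lemma ecoef_succ (a : ℂ) (n : ℕ) :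
    ((n : ℂ) + 1) * ecoef a (n + 1) = (a + n) * ecoef a n := by
  have h : (Nat.factorial (n + 1) : ℂ) = (n + 1) * n.factorial := by
    push_cast [Nat.factorial_succ]; ring
  have hf : (n.factorial : ℂ) ≠ 0 := Nat.cast_ne_zero.2 n.factorial_ne_zero
  have hn : ((n : ℂ) + 1) ≠ 0 := by
    have := Nat.cast_add_one_ne_zero (R := ℂ) n; simpa using this
  simp only [ecoef, cpoch_succ, h]
  field_simp

lemma norm_ecoef_succ (a : ℂ) (n : ℕ) :
    ‖ecoef a (n + 1)‖ = ‖a + n‖ * ‖ecoef a n‖ / (n + 1) := by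
  have h := ecoef_succ a n
  have hn : ((n : ℂ) + 1) ≠ 0 := by
    have := Nat.cast_add_one_ne_zero (R := ℂ) n; simpa using this
  have : ecoef a (n + 1) = (a + n) * ecoef a n / ((n : ℂ) + 1) := by
    field_simp; linear_combination h
  rw [this, norm_div, norm_mul]
  congr 1
  simpa using Complex.norm_natCast (n+1)

lemma ratio_bound (a : ℂ) {r ρ : ℝ} (hrρ : r < ρ) (hr0 : 0 ≤ r) :
    ∀ᶠ n : ℕ in atTop, ‖a + n‖ * r ≤ ρ * n := by
  filter_upwards [eventually_ge_atTop (Nat.ceil ((‖a‖ * r + ρ) / (ρ - r)))] with n hn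
  have hn' : ((‖a‖ * r + ρ) / (ρ - r)) ≤ (n : ℝ) := le_trans (Nat.le_ceil _) (by exact_mod_cast hn)
  have h1 : ‖a + (n : ℂ)‖ ≤ ‖a‖ + n := by
    simpa using norm_add_le a (n : ℂ)
  have h2 : ‖a‖ * r + ρ ≤ (ρ - r) * n := by
    rw [div_le_iff₀ (by linarith)] at hn'
    linarith
  nlinarith [norm_nonneg a, norm_nonneg (a + (n:ℂ))]

lemma summable_S1 (a : ℂ) {r : ℝ} (hr0 : 0 ≤ r) (hr : r < 1) :
    Summable (fun n => ‖ecoef a n‖ * r ^ n) := by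
  set ρ : ℝ := (1 + r) / 2 with hρdef
  have hrρ : r < ρ := by rw [hρdef]; linarith
  have hρ1 : ρ < 1 := by rw [hρdef]; linarith
  apply summable_of_ratio_norm_eventually_le hρ1
  filter_upwards [ratio_bound a hrρ hr0] with n hn
  have h1 : ‖a + (n:ℂ)‖ * r ≤ ρ * (n + 1) := by
    have : (0:ℝ) ≤ ρ := by linarith
    nlinarith
  rw [Real.norm_of_nonneg (by positivity), Real.norm_of_nonneg (by positivity),
    norm_ecoef_succ, pow_succ]
  have hn1 : (0:ℝ) < (n:ℝ) + 1 := by positivity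
  rw [div_mul_eq_mul_div, div_le_iff₀ hn1]
  have hb : ‖ecoef a n‖ * r ^ n ≥ 0 := by positivity
  calc ‖a + ↑n‖ * ‖ecoef a n‖ * (r ^ n * r) = (‖a + (n:ℂ)‖ * r) * (‖ecoef a n‖ * r ^ n) := by ring
    _ ≤ (ρ * (n+1)) * (‖ecoef a n‖ * r ^ n) := by
        apply mul_le_mul_of_nonneg_right h1 hb
    _ = ρ * (‖ecoef a n‖ * r ^ n) * (↑n + 1) := by ring

lemma summable_S2 (a : ℂ) {r : ℝ} (hr0 : 0 < r) (hr : r < 1) :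
    Summable (fun n : ℕ => (n : ℝ) * ‖ecoef a n‖ * r ^ n / r) := by
  set ρ : ℝ := (1 + r) / 2 with hρdef
  have hrρ : r < ρ := by rw [hρdef]; linarith
  have hρ1 : ρ < 1 := by rw [hρdef]; linarith
  apply summable_of_ratio_norm_eventually_le hρ1
  filter_upwards [ratio_bound a hrρ hr0.le] with n hn
  rw [Real.norm_of_nonneg (by positivity), Real.norm_of_nonneg (by positivity),
    mul_div_assoc' ρ]
  rw [div_le_div_iff_of_pos_right hr0]
  have hn1 : ((n:ℝ) + 1) ≠ 0 := by positivity
  have e1 : ((n + 1 : ℕ) : ℝ) * ‖ecoef a (n+1)‖ = ‖a + (n:ℂ)‖ * ‖ecoef a n‖ := by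
    rw [norm_ecoef_succ]; push_cast; field_simp
  rw [e1, pow_succ]
  have h2 := mul_le_mul_of_nonneg_right hn
    (mul_nonneg (norm_nonneg (ecoef a n)) (pow_nonneg hr0.le n))
  calc ‖a + (n:ℂ)‖ * ‖ecoef a n‖ * (r ^ n * r)
      = (‖a + (n:ℂ)‖ * r) * (‖ecoef a n‖ * r ^ n) := by ring
    _ ≤ (ρ * n) * (‖ecoef a n‖ * r ^ n) := h2
    _ = ρ * ((n:ℝ) * ‖ecoef a n‖ * r ^ n) := by ring

lemma summable_ecoef_mul_pow (a : ℂ) {y : ℂ} (hy : ‖y‖ < 1) :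
    Summable (fun n : ℕ => ecoef a n * y ^ n) := by
  apply Summable.of_norm
  have := summable_S1 a (norm_nonneg y) hy
  simpa [norm_mul, norm_pow] using this

set_option maxHeartbeats 1000000 in
lemma hasSum_one_sub_cpow (a : ℂ) {w : ℂ} (hw : ‖w‖ < 1) :
    HasSum (fun n : ℕ => ecoef a n * w ^ n) (((1 : ℂ) - w) ^ (-a)) := by
  set r : ℝ := (‖w‖ + 1) / 2 with hrdef
  have hr0 : 0 < r := by positivity
  have hwr : ‖w‖ < r := by rw [hrdef]; linarith
  have hr1 : r < 1 := by rw [hrdef]; linarith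
  set t : Set ℂ := Metric.ball 0 r with htdef
  have ht : IsOpen t := Metric.isOpen_ball
  have htc : Convex ℝ t := convex_ball 0 r
  have h0t : (0 : ℂ) ∈ t := Metric.mem_ball_self hr0
  have hwt : w ∈ t := by simpa [htdef, Metric.mem_ball, dist_zero_right] using hwr
  have hu := summable_S2 a hr0 hr1
  set g : ℕ → ℂ → ℂ := fun n y => ecoef a n * y ^ n with hgdef
  set g' : ℕ → ℂ → ℂ := fun n y => ecoef a n * (n * y ^ (n - 1)) with hg'def
  have hg : ∀ n y, y ∈ t → HasDerivAt (g n) (g' n y) y := fun n y _ =>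
    (hasDerivAt_pow n y).const_mul (ecoef a n)
  have hg' : ∀ n y, y ∈ t → ‖g' n y‖ ≤ (n : ℝ) * ‖ecoef a n‖ * r ^ n / r := by
    intro n y hy
    have hyr : ‖y‖ ≤ r := le_of_lt (by simpa [htdef, Metric.mem_ball, dist_zero_right] using hy)
    match n with
    | 0 => simp [hg'def]
    | (m+1) =>
      have h2 : ((m:ℝ)+1) * ‖ecoef a (m+1)‖ * r ^ (m+1) / r
          = ((m:ℝ)+1) * ‖ecoef a (m+1)‖ * r ^ m := by
        field_simp [pow_succ]; ring
      have h3 : ‖g' (m+1) y‖ = ((m:ℝ)+1) * ‖ecoef a (m+1)‖ * ‖y‖ ^ m := by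
        simp only [hg'def, norm_mul, norm_pow, Complex.norm_natCast]
        push_cast; ring
      push_cast
      rw [h2, h3]
      have h1 : ‖y‖ ^ m ≤ r ^ m := pow_le_pow_left₀ (norm_nonneg y) hyr m
      have h4 : (0:ℝ) ≤ ((m:ℝ)+1) * ‖ecoef a (m+1)‖ := by positivity
      exact mul_le_mul_of_nonneg_left h1 h4
  set f : ℂ → ℂ := fun y => ∑' n, g n y with hfdef
  have hg0 : Summable (fun n => g n 0) := summable_ecoef_mul_pow a (by norm_num)
  have hf' : ∀ y ∈ t, HasDerivAt f (∑' n, g' n y) y := fun y hy =>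
    hasDerivAt_tsum_of_isPreconnected hu ht htc.isPreconnected hg hg' h0t hg0 hy
  -- the ODE
  have hode : ∀ y ∈ t, (1 - y) * (∑' n, g' n y) = a * f y := by
    intro y hy
    have hyr : ‖y‖ < r := by simpa [htdef, Metric.mem_ball, dist_zero_right] using hy
    have hy1 : ‖y‖ < 1 := lt_trans hyr hr1
    have S : Summable (fun n => g' n y) :=
      Summable.of_norm (by
        apply Summable.of_nonneg_of_le (fun n => norm_nonneg _) (fun n => hg' n y hy) hu)
    have Sy : Summable (fun n => ecoef a n * y ^ n) := summable_ecoef_mul_pow a hy1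
    have shift : Summable (fun n => g' (n + 1) y) := (summable_nat_add_iff 1).2 S
    have hterm : ∀ n : ℕ, g' (n + 1) y = ((a + n) * ecoef a n) * y ^ n := by
      intro n
      have h := ecoef_succ a n
      show ecoef a (n + 1) * ((((n:ℕ) + 1 : ℕ) : ℂ) * y ^ (n + 1 - 1)) = _
      push_cast
      linear_combination y ^ n * h
    have hterm2 : ∀ n : ℕ, y * g' n y = ((n : ℂ) * ecoef a n) * y ^ n := by
      intro n
      match n with
      | 0 => simp [hg'def]
      | (m+1) =>
        show y * (ecoef a (m+1) * ((((m:ℕ)+1 : ℕ):ℂ) * y ^ m)) = _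
        rw [pow_succ]; push_cast; ring
    have A : ∑' n, g' n y = ∑' n, ((a + n) * ecoef a n) * y ^ n := by
      rw [Summable.tsum_eq_zero_add S]
      have : g' 0 y = 0 := by simp [hg'def]
      rw [this, zero_add]
      exact tsum_congr hterm
    have B : y * ∑' n, g' n y = ∑' n : ℕ, ((n : ℂ) * ecoef a n) * y ^ n := by
      rw [← tsum_mul_left]
      exact tsum_congr hterm2
    have SA : Summable (fun n : ℕ => ((a + n) * ecoef a n) * y ^ n) :=
      shift.congr hterm
    have SB : Summable (fun n : ℕ => ((n : ℂ) * ecoef a n) * y ^ n) :=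
      (S.mul_left y).congr hterm2
    calc (1 - y) * (∑' n, g' n y) = (∑' n, g' n y) - y * ∑' n, g' n y := by ring
      _ = (∑' n, ((a + n) * ecoef a n) * y ^ n) - ∑' n : ℕ, ((n : ℂ) * ecoef a n) * y ^ n := by
          rw [B, A]
      _ = ∑' n : ℕ, (((a + n) * ecoef a n) * y ^ n - ((n : ℂ) * ecoef a n) * y ^ n) :=
          (Summable.tsum_sub SA SB).symm
      _ = ∑' n : ℕ, a * (ecoef a n * y ^ n) := tsum_congr (fun n => by ring)
      _ = a * f y := tsum_mul_left
  -- the function G y = f y * (1 - y) ^ a has zero derivative on the ball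
  have hslit : ∀ y ∈ t, (1 - y) ∈ Complex.slitPlane ∧ (1 - y) ≠ 0 := by
    intro y hy
    have hyr : ‖y‖ < r := by simpa [htdef, Metric.mem_ball, dist_zero_right] using hy
    have hre : 0 < (1 - y).re := by
      have h1 : y.re ≤ ‖y‖ := by
        simpa using Complex.re_le_norm y
      simp only [Complex.sub_re, Complex.one_re]
      linarith
    refine ⟨Complex.mem_slitPlane_iff.2 (Or.inl hre), fun h => by rw [h] at hre; simp at hre⟩
  set G : ℂ → ℂ := fun y => f y * (1 - y) ^ a with hGdef
  have hG : ∀ y ∈ t, HasDerivAt G 0 y := by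
    intro y hy
    obtain ⟨hsl, hne⟩ := hslit y hy
    have d2 : HasDerivAt (fun x : ℂ => (1 - x) ^ a) (a * (1 - y) ^ (a - 1) * (-1)) y := by
      have hid : HasDerivAt (fun x : ℂ => 1 - x) (-1) y := by
        simpa using (hasDerivAt_id y).const_sub 1
      exact hid.cpow_const hsl
    have := (hf' y hy).mul d2
    have hval : (∑' n, g' n y) * (1 - y) ^ a + f y * (a * (1 - y) ^ (a - 1) * (-1)) = 0 := by
      have hsplit : ((1:ℂ) - y) ^ a = (1 - y) ^ (a - 1) * (1 - y) := by
        have h2 : ((1:ℂ) - y) ^ (a - 1) * (1 - y) = (1 - y) ^ (a - 1) * (1 - y) ^ (1:ℂ) := by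
          rw [Complex.cpow_one]
        rw [h2, ← Complex.cpow_add _ _ hne]
        ring_nf
      rw [hsplit]
      linear_combination (1 - y) ^ (a - 1) * hode y hy
    rw [hval] at this
    exact this
  have hdiff : DifferentiableOn ℂ G t := fun y hy =>
    (hG y hy).differentiableAt.differentiableWithinAt
  have hfd : ∀ y ∈ t, fderivWithin ℂ G t y = 0 := by
    intro y hy
    rw [fderivWithin_of_isOpen ht hy]
    have h0 : HasFDerivAt G (0 : ℂ →L[ℂ] ℂ) y := by
      have := hasDerivAt_iff_hasFDerivAt.1 (hG y hy)
      exact this.congr_fderiv (by ext; simp)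
    exact h0.fderiv
  have hconst : G w = G 0 := htc.is_const_of_fderivWithin_eq_zero hdiff hfd hwt h0t
  have hf0 : f 0 = 1 := by
    have : f 0 = ∑' n : ℕ, ecoef a n * (0:ℂ) ^ n := rfl
    rw [this, tsum_eq_single 0 (fun n hn => by simp [zero_pow hn])]
    simp [ecoef_zero]
  have hG0 : G 0 = 1 := by
    simp only [hGdef, sub_zero, Complex.one_cpow, mul_one, hf0]
  obtain ⟨hslw, hnew⟩ := hslit w hwt
  have hpow_ne : ((1:ℂ) - w) ^ a ≠ 0 := by
    simp [Complex.cpow_eq_zero_iff, hnew]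
  have hfw : f w = ((1:ℂ) - w) ^ (-a) := by
    have h1 : f w * (1 - w) ^ a = 1 := hconst.trans hG0
    rw [Complex.cpow_neg]
    exact eq_inv_of_mul_eq_one_left h1
  have := (summable_ecoef_mul_pow a hw).hasSum
  rw [show ∑' n : ℕ, ecoef a n * w ^ n = f w from rfl, hfw] at this
  exact this

lemma ne_zero_of_re_pos' {s : ℂ} (h : 0 < s.re) : s ≠ 0 := fun h0 => by simp [h0] at h

lemma cpoch_ne_zero {s : ℂ} (hs : 0 < s.re) (n : ℕ) : cpoch s n ≠ 0 :=
  Finset.prod_ne_zero_iff.2 fun i _ =>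
    ne_zero_of_re_pos' (by simp only [Complex.add_re, Complex.natCast_re]; positivity)

lemma Gamma_cpoch {s : ℂ} (hs : 0 < s.re) (n : ℕ) :
    Complex.Gamma (s + n) = Complex.Gamma s * cpoch s n := by
  induction n with
  | zero => simp [cpoch_zero]
  | succ n ih =>
    have hne : s + (n : ℂ) ≠ 0 :=
      ne_zero_of_re_pos' (by simp only [Complex.add_re, Complex.natCast_re]; positivity)
    have h1 : s + ((n : ℕ) + 1 : ℕ) = (s + n) + 1 := by push_cast; ring
    rw [h1, Complex.Gamma_add_one _ hne, ih, cpoch_succ]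
    ring

theorem stmt2 (a b c z : ℂ) (hz : ‖z‖ < 1) (hb : 0 < b.re) (hbc : b.re < c.re) :
    hyp2F1 a b c z =
      Complex.Gamma c / (Complex.Gamma b * Complex.Gamma (c - b)) *
        ∫ t in (0:ℝ)..1,
          (t : ℂ) ^ (b - 1) * ((1 : ℂ) - t) ^ (c - b - 1) * ((1 : ℂ) - z * t) ^ (-a) := by
  have hcb : 0 < (c - b).re := by simp only [Complex.sub_re]; linarith
  have hcre : 0 < c.re := lt_trans hb hbc
  set E : ℕ → ℂ := fun n => ecoef a n * z ^ n with hEdef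
  set base : ℝ → ℂ := fun t => (t:ℂ) ^ (b - 1) * ((1:ℂ) - t) ^ (c - b - 1) with hbasedef
  set Gn : ℕ → ℝ → ℂ :=
    fun n t => E n * ((t:ℂ) ^ (b + n - 1) * ((1:ℂ) - t) ^ (c - b - 1)) with hGndef
  have hre_bn : ∀ n : ℕ, 0 < (b + (n:ℂ)).re := by
    intro n
    simp only [Complex.add_re, Complex.natCast_re]
    positivity
  have hbeta : ∀ n : ℕ, IntervalIntegrable
      (fun x : ℝ => (x:ℂ) ^ (b + (n:ℂ) - 1) * ((1:ℂ) - x) ^ (c - b - 1)) volume 0 1 :=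
    fun n => Complex.betaIntegral_convergent (hre_bn n) hcb
  have hGn_int : ∀ n, IntegrableOn (Gn n) (Set.Ioc 0 1) volume := by
    intro n
    have h2 := ((hbeta n).const_mul (E n))
    exact (intervalIntegrable_iff_integrableOn_Ioc_of_le zero_le_one).1 h2
  have hFG : Set.EqOn
      (fun t : ℝ => (t:ℂ) ^ (b - 1) * ((1:ℂ) - t) ^ (c - b - 1) * ((1:ℂ) - z * t) ^ (-a))
      (fun t => ∑' n, Gn n t) (Set.Ioc 0 1) := by
    intro t ht
    obtain ⟨ht0, ht1⟩ := ht
    have hzt : ‖z * (t:ℂ)‖ < 1 := by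
      rw [norm_mul]
      have h1 : ‖(t:ℂ)‖ = t := by
        rw [Complex.norm_real, Real.norm_of_nonneg ht0.le]
      rw [h1]
      nlinarith [norm_nonneg z]
    have hsum := (hasSum_one_sub_cpow a hzt).tsum_eq
    show (t:ℂ) ^ (b - 1) * ((1:ℂ) - t) ^ (c - b - 1) * ((1:ℂ) - z * t) ^ (-a) = ∑' n, Gn n t
    rw [← hsum, ← tsum_mul_left]
    apply tsum_congr
    intro n
    have htne : (t : ℂ) ≠ 0 := by exact_mod_cast ne_of_gt ht0
    have hpow : (t:ℂ) ^ (b - 1) * (t:ℂ) ^ (n:ℕ) = (t:ℂ) ^ (b + (n:ℂ) - 1) := by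
      rw [← Complex.cpow_natCast, ← Complex.cpow_add _ _ htne]
      congr 1; ring
    have hmp : (z * (t:ℂ)) ^ n = z ^ n * (t:ℂ) ^ n := mul_pow _ _ _
    simp only [hGndef, hEdef]
    rw [hmp, ← hpow]
    ring
  have hbase_int : IntegrableOn base (Set.Ioc 0 1) volume :=
    (intervalIntegrable_iff_integrableOn_Ioc_of_le zero_le_one).1
      (Complex.betaIntegral_convergent hb hcb)
  set K : ℝ≥0∞ := ∫⁻ t in Set.Ioc (0:ℝ) 1, ‖base t‖₊ with hKdef
  have hK : K < ⊤ := hbase_int.2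
  have hbound : ∀ n, (∫⁻ t in Set.Ioc (0:ℝ) 1, ‖Gn n t‖₊) ≤ (‖E n‖₊ : ℝ≥0∞) * K := by
    intro n
    have h1 : ∀ t ∈ Set.Ioc (0:ℝ) 1, (‖Gn n t‖₊ : ℝ≥0∞) ≤ (‖E n‖₊ : ℝ≥0∞) * ‖base t‖₊ := by
      rintro t ⟨ht0, ht1⟩
      have key : ‖(t:ℂ) ^ (b + (n:ℂ) - 1)‖ ≤ ‖(t:ℂ) ^ (b - 1)‖ := by
        rw [Complex.norm_cpow_eq_rpow_re_of_pos ht0, Complex.norm_cpow_eq_rpow_re_of_pos ht0]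
        apply Real.rpow_le_rpow_of_exponent_ge ht0 ht1
        simp only [Complex.sub_re, Complex.add_re, Complex.one_re, Complex.natCast_re]
        linarith [Nat.cast_nonneg (α := ℝ) n]
      have h2 : ‖Gn n t‖ ≤ ‖E n * base t‖ := by
        simp only [hGndef, hbasedef, norm_mul]
        rw [mul_comm ‖((t:ℂ))^(b-1)‖]
        rw [mul_comm ‖((t:ℂ))^(b + (n:ℂ)-1)‖]
        apply mul_le_mul_of_nonneg_left _ (norm_nonneg _)
        apply mul_le_mul_of_nonneg_left key (norm_nonneg _)
      rw [← ENNReal.coe_mul, ENNReal.coe_le_coe, ← nnnorm_mul]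
      exact_mod_cast h2
    calc (∫⁻ t in Set.Ioc (0:ℝ) 1, ‖Gn n t‖₊)
        ≤ ∫⁻ t in Set.Ioc (0:ℝ) 1, (‖E n‖₊ : ℝ≥0∞) * ‖base t‖₊ :=
          lintegral_mono_ae ((ae_restrict_iff' measurableSet_Ioc).2 (Filter.Eventually.of_forall h1))
      _ = (‖E n‖₊ : ℝ≥0∞) * K := lintegral_const_mul' _ _ ENNReal.coe_ne_top
  have SN : Summable (fun n => ‖E n‖₊) := by
    rw [← NNReal.summable_coe]
    simp only [coe_nnnorm]
    have := summable_S1 a (norm_nonneg z) hz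
    apply this.congr
    intro n
    simp [hEdef, norm_mul, norm_pow]
  have htsum_ne : (∑' n, ∫⁻ t in Set.Ioc (0:ℝ) 1, ‖Gn n t‖₊) ≠ ⊤ := by
    apply ne_top_of_le_ne_top _ (ENNReal.tsum_le_tsum hbound)
    rw [ENNReal.tsum_mul_right]
    exact ENNReal.mul_ne_top (ENNReal.tsum_coe_ne_top_iff_summable.2 SN) hK.ne
  have hswap : ∫ t in Set.Ioc (0:ℝ) 1, (∑' n, Gn n t) = ∑' n, ∫ t in Set.Ioc (0:ℝ) 1, Gn n t :=
    integral_tsum (fun n => (hGn_int n).aestronglyMeasurable) htsum_ne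
  have hInt : ∀ n : ℕ, (∫ t in Set.Ioc (0:ℝ) 1, Gn n t)
      = E n * (Complex.Gamma (b + n) * Complex.Gamma (c - b) / Complex.Gamma (c + n)) := by
    intro n
    have hcn : Complex.Gamma (c + (n:ℂ)) ≠ 0 := Complex.Gamma_ne_zero_of_re_pos (by
      simp only [Complex.add_re, Complex.natCast_re]; positivity)
    have hGamma := Complex.Gamma_mul_Gamma_eq_betaIntegral (hre_bn n) hcb
    have he : b + (n:ℂ) + (c - b) = c + n := by ring
    rw [he] at hGamma
    have hbv : Complex.betaIntegral (b + (n:ℂ)) (c - b)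
        = Complex.Gamma (b + n) * Complex.Gamma (c - b) / Complex.Gamma (c + n) := by
      rw [eq_div_iff hcn]
      linear_combination -hGamma
    rw [← intervalIntegral.integral_of_le zero_le_one]
    have : (∫ t in (0:ℝ)..1, Gn n t)
        = E n * ∫ t in (0:ℝ)..1, (t:ℂ) ^ (b + (n:ℂ) - 1) * ((1:ℂ) - t) ^ (c - b - 1) :=
      intervalIntegral.integral_const_mul _ _
    rw [this, ← Complex.betaIntegral, hbv]
  have hb0 : Complex.Gamma b ≠ 0 := Complex.Gamma_ne_zero_of_re_pos hb
  have hcb0 : Complex.Gamma (c - b) ≠ 0 := Complex.Gamma_ne_zero_of_re_pos hcb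
  have hc0 : Complex.Gamma c ≠ 0 := Complex.Gamma_ne_zero_of_re_pos hcre
  have hmain : (∫ t in (0:ℝ)..1,
      (t : ℂ) ^ (b - 1) * ((1 : ℂ) - t) ^ (c - b - 1) * ((1 : ℂ) - z * t) ^ (-a))
      = ∑' n : ℕ, E n * (Complex.Gamma (b + n) * Complex.Gamma (c - b) / Complex.Gamma (c + n)) := by
    rw [intervalIntegral.integral_of_le zero_le_one,
      setIntegral_congr_fun measurableSet_Ioc hFG, hswap]
    exact tsum_congr hInt
  rw [hmain, ← tsum_mul_left]
  apply tsum_congr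
  intro n
  rw [Gamma_cpoch hb n, Gamma_cpoch hcre n]
  have hpc : cpoch c n ≠ 0 := cpoch_ne_zero hcre n
  have hfac : ((n.factorial : ℕ) : ℂ) ≠ 0 := Nat.cast_ne_zero.2 n.factorial_ne_zero
  simp only [hEdef, ecoef]
  field_simp
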